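/- arXiv:1505.00754 — 5 statements merged into one kernel-verified Lean document; each statement's English description precedes it below -/
import Mathlib

section
/- Let L be an abelian group and A = ⊕_{n∈L} A_n an L-graded commutative integral domain which is integrally closed in its fraction field (a normal domain). Then A_0 is integrally closed in its fraction field. -/
open DirectSum IsLocalization

set_option maxHeartbeats 1000000
/-- If an `L`-graded commutative integral domain `A` is integrally closed in its fraction
field (a normal domain), then so is its degree-zero subring `A₀`. -/
theorem gradeZero_isIntegrallyClosed {L A : Type*} [AddCommGroup L] [DecidableEq L] [CommRing A]
    (𝒜 : L → AddSubgroup A) [GradedRing 𝒜] [IsDomain A] [IsIntegrallyClosed A] :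
    IsIntegrallyClosed (𝒜 0) := by
  set R := SetLike.GradeZero.subring 𝒜
  have hinj : Function.Injective (R.subtype) := Subtype.coe_injective
  haveI : IsDomain (𝒜 0) := Function.Injective.isDomain R.subtype hinj
  set K := FractionRing (𝒜 0)
  set F := FractionRing A
  set g : (𝒜 0) →+* F := (algebraMap A F).comp R.subtype with hg
  have hginj : Function.Injective g := (IsFractionRing.injective A F).comp hinj
  set φ : K →+* F := IsFractionRing.lift hginj with hφ
  have hφg : ∀ r : (𝒜 0), φ (algebraMap (𝒜 0) K r) = g r := fun r =>
    IsFractionRing.lift_algebraMap hginj r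
  rw [isIntegrallyClosed_iff K]
  rintro x hx
  -- x = a / b
  obtain ⟨a, b, hb, rfl⟩ := IsFractionRing.div_surjective (A := 𝒜 0) x
  -- φ x is integral over A
  obtain ⟨p, hpmonic, hpeval⟩ := hx
  have hint : IsIntegral A (φ (algebraMap (𝒜 0) K a / algebraMap (𝒜 0) K b)) := by
    refine ⟨p.map R.subtype, hpmonic.map _, ?_⟩
    have := congrArg φ hpeval
    rw [map_zero] at this
    rw [← this]
    erw [Polynomial.eval₂_map, Polynomial.hom_eval₂]
    congr 1
    ext r
    exact (hφg r).symm
  obtain ⟨c, hc⟩ := IsIntegrallyClosed.algebraMap_eq_of_integral hint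
  -- relation a = b * c in A
  have hb0 : b ≠ 0 := nonZeroDivisors.ne_zero hb
  have hbne : (b : A) ≠ 0 := fun h => hb0 (Subtype.ext h)
  have hbK : algebraMap (𝒜 0) K b ≠ 0 := fun h =>
    hb0 ((IsFractionRing.to_map_eq_zero_iff (K := K)).mp h)
  have hbF : algebraMap A F (b : A) ≠ 0 := fun h =>
    hbne ((IsFractionRing.to_map_eq_zero_iff (K := F)).mp h)
  have key : (a : A) = (b : A) * c := by
    apply IsFractionRing.injective A F
    rw [map_mul, hc, map_div₀, hφg, hφg]
    show algebraMap A F (a : A) =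
      algebraMap A F (b : A) * (algebraMap A F (a : A) / algebraMap A F (b : A))
    rw [mul_div_cancel₀ _ hbF]
  -- c is in 𝒜 0
  have hc0 : c ∈ 𝒜 0 := by
    have h1 : (decompose 𝒜 ((b : A) * c) (0 + 0) : A) = (b : A) * (decompose 𝒜 c 0 : A) :=
      DirectSum.coe_decompose_mul_add_of_left_mem 𝒜 b.2
    have h2 : (decompose 𝒜 ((b : A) * c) 0 : A) = (b : A) * c := by
      rw [decompose_of_mem_same 𝒜 (key ▸ a.2)]
    rw [zero_add, h2] at h1
    have : c = (decompose 𝒜 c 0 : A) := mul_left_cancel₀ hbne h1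
    rw [this]
    exact (decompose 𝒜 c 0).2
  refine ⟨⟨c, hc0⟩, ?_⟩
  have : a = b * ⟨c, hc0⟩ := Subtype.ext key
  rw [this, map_mul, mul_comm, mul_div_assoc, div_self hbK, mul_one]
end

section
/- Let L be a finitely generated abelian group, C a commutative ring, and A = ⊕_{n∈L} A_n an L-graded ring with C ⊆ A_0, such that A is a finitely generated C-algebra. Then A_0 is a finitely generated C-algebra. -/
variable {L A : Type*} [AddCommGroup L] [DecidableEq L] [CommRing A]
variable (𝒜 : L → AddSubgroup A) [GradedRing 𝒜]

/-- The degree-zero subring `A₀` acts on `A` by multiplication, making `A` an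
`A₀`-algebra. -/
instance gradeZeroAlgebra : Algebra (𝒜 0) A :=
  RingHom.toAlgebra
    { toFun := Subtype.val, map_one' := rfl, map_mul' := fun _ _ => rfl,
      map_zero' := rfl, map_add' := fun _ _ => rfl }

section Gordan

variable {σ : Type*} [Finite σ] {M : Type*} [AddCommGroup M]

/-- The set of minimal nonzero elements of `{a | d a = 0}`. -/
private def minKer (d : (σ →₀ ℕ) → M) : Set (σ →₀ ℕ) :=
  {a | (d a = 0 ∧ a ≠ 0) ∧ ∀ b, (d b = 0 ∧ b ≠ 0) → b ≤ a → b = a}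

private lemma minKer_finite (d : (σ →₀ ℕ) → M) : (minKer d).Finite := by
  have hpwo : ({a : σ →₀ ℕ | d a = 0 ∧ a ≠ 0}).IsPWO := Set.isPWO_of_wellQuasiOrderedLE _
  refine IsAntichain.finite_of_partiallyWellOrderedOn (r := (· ≤ ·)) ?_
    (hpwo.mono ?_)
  · rintro a ⟨ha, hamin⟩ b ⟨hb, hbmin⟩ hne hab
    exact hne (hbmin a ha hab)
  · rintro a ⟨ha, -⟩; exact ha

private lemma mem_closure_minKer (d : (σ →₀ ℕ) → M)
    (hd : ∀ a b, d (a + b) = d a + d b) :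
    ∀ N (a : σ →₀ ℕ), (a.sum fun _ n => n) ≤ N → d a = 0 →
      a ∈ AddSubmonoid.closure (minKer d) := by
  intro N
  induction N with
  | zero =>
    intro a hN _
    have : a = 0 := by
      ext x
      by_cases hx : x ∈ a.support
      · exact Finset.sum_eq_zero_iff.mp (Nat.le_zero.mp hN) x hx
      · simpa using Finsupp.notMem_support_iff.mp hx
    exact this ▸ zero_mem _
  | succ N ih =>
    intro a hN ha
    by_cases h0 : a = 0
    · exact h0 ▸ zero_mem _
    · have hSpwo : ({b : σ →₀ ℕ | d b = 0 ∧ b ≠ 0}).IsPWO := Set.isPWO_of_wellQuasiOrderedLE _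
      set U : Set (σ →₀ ℕ) := {b | (d b = 0 ∧ b ≠ 0) ∧ b ≤ a} with hU
      have hUwf : U.IsWF := (hSpwo.mono (fun b hb => hb.1)).isWF
      have hUne : U.Nonempty := ⟨a, ⟨ha, h0⟩, le_rfl⟩
      set b := hUwf.min hUne with hb
      have hbU : b ∈ U := hUwf.min_mem hUne
      have hbT : b ∈ minKer d := by
        refine ⟨hbU.1, fun c hc hcb => ?_⟩
        by_contra hne'
        exact hUwf.not_lt_min hUne ⟨hc, hcb.trans hbU.2⟩ (lt_of_le_of_ne hcb hne')
      have hba : b ≤ a := hbU.2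
      have key : b + (a - b) = a := add_tsub_cancel_of_le hba
      have hd' : d (a - b) = 0 := by
        have := hd b (a - b)
        rw [key, ha, hbU.1.1, zero_add] at this
        exact this.symm
      have hsum : ((a - b).sum fun _ n => n) ≤ N := by
        have hadd : (b.sum fun _ n => n) + ((a - b).sum fun _ n => n)
            = a.sum fun _ n => n := by
          rw [← Finsupp.sum_add_index' (fun _ => rfl) (fun _ _ _ => rfl), key]
        have hbpos : 0 < b.sum fun _ n => n := by
          rcases Nat.eq_zero_or_pos (b.sum fun _ n => n) with hz | hp
          · exfalso
            apply hbU.1.2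
            ext x
            by_cases hx : x ∈ b.support
            · exact Finset.sum_eq_zero_iff.mp hz x hx
            · simpa using Finsupp.notMem_support_iff.mp hx
          · exact hp
        omega
      have := ih (a - b) hsum hd'
      rw [← key]
      exact AddSubmonoid.add_mem _ (AddSubmonoid.subset_closure hbT) this

end Gordan

/-- If `L` is a finitely generated abelian group, `C ⊆ A₀` is a subring (encoded here by
`A₀` being a `C`-algebra with compatible scalar tower `C → A₀ → A`), and the `L`-graded
ring `A` is a finitely generated `C`-algebra, then `A₀` is a finitely generated
`C`-algebra. -/
theorem gradeZero_finiteType_over_base [AddGroup.FG L] {C : Type*} [CommRing C]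
    [Algebra C A] [Algebra C (𝒜 0)] [IsScalarTower C (𝒜 0) A]
    (h : Algebra.FiniteType C A) :
    Algebra.FiniteType C (𝒜 0) := by
  classical
  obtain ⟨s₀, hs₀⟩ := h.1
  -- a finite homogeneous generating set
  set s : Finset A := s₀.biUnion (fun x =>
    (DirectSum.decompose 𝒜 x).support.image fun i => (DirectSum.decompose 𝒜 x i : A)) with hsdef
  have hhom : ∀ x ∈ s, ∃ i, x ∈ 𝒜 i := by
    intro x hx
    simp only [hsdef, Finset.mem_biUnion, Finset.mem_image] at hx
    obtain ⟨y, -, i, -, rfl⟩ := hx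
    exact ⟨i, SetLike.coe_mem _⟩
  have hgen : Algebra.adjoin C (↑s : Set A) = ⊤ := by
    rw [eq_top_iff, ← hs₀, Algebra.adjoin_le_iff]
    intro x hx
    rw [← DirectSum.sum_support_decompose 𝒜 x]
    refine Subalgebra.sum_mem _ fun i hi => Algebra.subset_adjoin ?_
    simp only [hsdef, Finset.coe_biUnion, Set.mem_iUnion, Finset.mem_coe, Finset.mem_image]
    exact ⟨x, hx, i, hi, rfl⟩
  -- degree function
  have hdeg : ∀ x : ↥(↑s : Set A), (x : A) ∈ 𝒜 ((hhom x x.2).choose) :=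
    fun x => (hhom x x.2).choose_spec
  set deg : ↥(↑s : Set A) → L := fun x => (hhom x x.2).choose with hdegdef
  -- monomials and their degrees
  set d : (↥(↑s : Set A) →₀ ℕ) → L := fun a => a.sum fun x n => n • deg x with hddef
  set m : (↥(↑s : Set A) →₀ ℕ) → A := fun a => a.prod fun x n => (x : A) ^ n with hmdef
  have hd0 : d 0 = 0 := Finsupp.sum_zero_index
  have hdadd : ∀ a b, d (a + b) = d a + d b := fun a b =>
    Finsupp.sum_add_index' (fun x => zero_smul ℕ _) (fun x n k => add_smul n k _)
  have hm0 : m 0 = 1 := Finsupp.prod_zero_index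
  have hmadd : ∀ a b, m (a + b) = m a * m b := fun a b =>
    Finsupp.prod_add_index' (fun x => pow_zero _) (fun x n k => pow_add _ n k)
  have hmmem : ∀ a, m a ∈ 𝒜 (d a) := by
    intro a
    induction a using Finsupp.induction with
    | zero => rw [hm0, hd0]; exact SetLike.one_mem_graded 𝒜
    | single_add x n f hxf hn ih =>
      rw [hmadd, hdadd]
      refine SetLike.mul_mem_graded ?_ ih
      have h1 : m (Finsupp.single x n) = (x : A) ^ n :=
        Finsupp.prod_single_index (pow_zero _)
      have h2 : d (Finsupp.single x n) = n • deg x :=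
        Finsupp.sum_single_index (zero_smul ℕ _)
      rw [h1, h2]
      exact SetLike.pow_mem_graded n (hdeg x)
  -- grade of algebraMap C A
  have halg : ∀ c : C, algebraMap C A c ∈ 𝒜 0 := by
    intro c
    rw [IsScalarTower.algebraMap_apply C (𝒜 0) A]
    exact SetLike.coe_mem _
  -- the finite set of degree-zero monomials
  set T : Set (↥(↑s : Set A) →₀ ℕ) := minKer d with hTdef
  set V : Set A := m '' T with hVdef
  have hVfin : V.Finite := (minKer_finite d).image m
  have hVmem : ∀ y ∈ V, y ∈ 𝒜 0 := by
    rintro y ⟨b, hb, rfl⟩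
    have : d b = 0 := hb.1.1
    exact this ▸ hmmem b
  -- monomials of kernel elements lie in the adjoin of V
  have hmcl' : ∀ a ∈ AddSubmonoid.closure T, m a ∈ Algebra.adjoin C V := by
    intro a hcl
    induction hcl using AddSubmonoid.closure_induction with
    | mem b hb => exact Algebra.subset_adjoin ⟨b, hb, rfl⟩
    | zero => rw [hm0]; exact one_mem _
    | add u v _ _ ihu ihv =>
      rw [hmadd]
      exact mul_mem ihu ihv
  have hmcl : ∀ a, d a = 0 → m a ∈ Algebra.adjoin C V := fun a ha =>
    hmcl' a (mem_closure_minKer d hdadd _ a le_rfl ha)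
  -- every element of the monoid closure of s is a monomial
  have hmono : ∀ y ∈ Submonoid.closure (↑s : Set A), ∃ a, y = m a := by
    intro y hy
    induction hy using Submonoid.closure_induction with
    | mem x hx =>
      have hx1 : (Finsupp.single (⟨x, hx⟩ : ↥(↑s : Set A)) 1).prod
          (fun x n => (x : A) ^ n) = ((⟨x, hx⟩ : ↥(↑s : Set A)) : A) ^ 1 :=
        Finsupp.prod_single_index (pow_zero _)
      refine ⟨Finsupp.single ⟨x, hx⟩ 1, ?_⟩
      simp only [hmdef]
      rw [hx1, pow_one]
    | one => exact ⟨0, hm0.symm⟩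
    | mul u v _ _ ihu ihv =>
      obtain ⟨a, rfl⟩ := ihu
      obtain ⟨b, rfl⟩ := ihv
      exact ⟨a + b, (hmadd a b).symm⟩
  -- projection of everything in the span lands in adjoin C V
  have hproj : ∀ y ∈ Submodule.span C ((Submonoid.closure (↑s : Set A) : Set A)),
      ((DirectSum.decompose 𝒜 y 0 : 𝒜 0) : A) ∈ Algebra.adjoin C V := by
    intro y hy
    induction hy using Submodule.span_induction with
    | mem y hy =>
      obtain ⟨a, rfl⟩ := hmono y hy
      by_cases hda : d a = 0
      · rw [DirectSum.decompose_of_mem_same 𝒜 (hda ▸ hmmem a)]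
        exact hmcl a hda
      · rw [DirectSum.decompose_of_mem_ne 𝒜 (hmmem a) hda]
        exact zero_mem _
    | zero =>
      rw [DirectSum.decompose_zero]
      simp only [DirectSum.zero_apply, ZeroMemClass.coe_zero]
      exact zero_mem _
    | add u v _ _ ihu ihv =>
      rw [DirectSum.decompose_add]
      simp only [DirectSum.add_apply, AddSubgroup.coe_add]
      exact add_mem ihu ihv
    | smul c u hu ihu =>
      have hcu : c • u = algebraMap C A c * u := Algebra.smul_def c u
      have := DirectSum.coe_decompose_mul_add_of_left_mem 𝒜 (i := 0) (j := 0)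
        (b := u) (halg c)
      rw [zero_add] at this
      rw [hcu, this]
      exact mul_mem (Subalgebra.algebraMap_mem _ c) ihu
  -- hence every degree-zero element lies in adjoin C V
  have hmain : ∀ z : 𝒜 0, (z : A) ∈ Algebra.adjoin C V := by
    intro z
    have hz : (z : A) ∈ Submodule.span C ((Submonoid.closure (↑s : Set A) : Set A)) := by
      rw [← Algebra.adjoin_eq_span, hgen]
      exact Submodule.mem_top
    have := hproj _ hz
    rwa [DirectSum.decompose_of_mem_same 𝒜 z.2] at this
  -- pull back to a finite generating set of 𝒜 0
  set F : Set (𝒜 0) := Subtype.val ⁻¹' V with hFdef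
  have hFfin : F.Finite := hVfin.preimage (Subtype.val_injective.injOn)
  have himg : Subtype.val '' F = V := by
    apply Set.image_preimage_eq_of_subset
    intro y hy
    exact ⟨⟨y, hVmem y hy⟩, rfl⟩
  refine ⟨⟨hFfin.toFinset, ?_⟩⟩
  rw [eq_top_iff]
  rintro z -
  rw [Set.Finite.coe_toFinset]
  set ι : (𝒜 0) →ₐ[C] A := IsScalarTower.toAlgHom C (𝒜 0) A with hι
  have hιval : ∀ w : 𝒜 0, ι w = (w : A) := fun w => rfl
  have hmap : (Algebra.adjoin C F).map ι = Algebra.adjoin C V := by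
    rw [AlgHom.map_adjoin]
    congr 1
  have hz : ι z ∈ (Algebra.adjoin C F).map ι := by
    rw [hmap, hιval]
    exact hmain z
  obtain ⟨w, hw, hwz⟩ := hz
  have : w = z := Subtype.val_injective hwz
  exact this ▸ hw
end

section
/- Let L be an abelian group and A = ⊕_{n∈L} A_n a noetherian L-graded commutative ring. Then A_0 is noetherian and each A_n is a finitely generated A_0-module. -/
variable {L A : Type*} [AddCommGroup L] [DecidableEq L] [CommRing A]
variable (𝒜 : L → AddSubgroup A) [GradedRing 𝒜]

lemma gy_smul_def (c : 𝒜 0) (x : A) : c • x = (c : A) * x := rfl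

/-- The graded piece `𝒜 n` as an `A₀`-submodule of `A`. -/
def gyPiece (n : L) : Submodule (𝒜 0) A where
  carrier := 𝒜 n
  add_mem' := fun ha hb => add_mem ha hb
  zero_mem' := zero_mem _
  smul_mem' := fun c x hx => by
    rw [gy_smul_def]
    have := SetLike.mul_mem_graded c.2 hx
    rwa [zero_add] at this

/-- Key lemma: for an `A₀`-submodule `M ⊆ 𝒜 n`, the degree-`n` component of any
element of the ideal `M·A` lies in `M`. -/
lemma gy_key (n : L) (M : Submodule (𝒜 0) A) (hM : (M : Set A) ⊆ (𝒜 n : Set A)) :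
    ∀ x ∈ Ideal.span (M : Set A), x ∈ 𝒜 n → x ∈ M := by
  have main : ∀ x ∈ Ideal.span (M : Set A), ∀ c : A,
      (DirectSum.decompose 𝒜 (c * x) n : A) ∈ M := by
    intro x hx
    refine Submodule.span_induction (p := fun x _ => ∀ c : A,
      (DirectSum.decompose 𝒜 (c * x) n : A) ∈ M) ?_ ?_ ?_ ?_ hx
    · intro s hs c
      have hsn : s ∈ 𝒜 n := hM hs
      have h0 : (DirectSum.decompose 𝒜 (c * s) ((0 : L) + n) : A) =
          (DirectSum.decompose 𝒜 c 0 : A) * s :=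
        DirectSum.coe_decompose_mul_add_of_right_mem 𝒜 hsn
      rw [zero_add] at h0
      rw [h0]
      exact M.smul_mem (⟨(DirectSum.decompose 𝒜 c 0 : A), SetLike.coe_mem _⟩ : 𝒜 0) hs
    · intro c; simp
    · intro a b _ _ ha hb c
      rw [mul_add, DirectSum.decompose_add]
      exact M.add_mem (by simpa using ha c) (by simpa using hb c)
    · intro a x _ hx c
      have : c * (a • x) = (c * a) * x := by
        rw [smul_eq_mul]; ring
      rw [this]
      exact hx (c * a)
  intro x hx hxn
  have := main x hx 1
  rwa [one_mul, DirectSum.decompose_of_mem_same 𝒜 hxn] at this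

/-- Every `A₀`-submodule of `A` contained in a graded piece is finitely generated. -/
lemma gy_fg [IsNoetherianRing A] (n : L) : (gyPiece 𝒜 n).FG := by
  -- take a maximal element among ideals generated by f.g. submodules of `gyPiece 𝒜 n`
  have wf : WellFounded ((· > ·) : Ideal A → Ideal A → Prop) :=
    isNoetherian_iff.mp ‹IsNoetherianRing A›
  set S : Set (Ideal A) :=
    {I | ∃ M : Submodule (𝒜 0) A, M.FG ∧ M ≤ gyPiece 𝒜 n ∧ I = Ideal.span (M : Set A)}
  have hne : S.Nonempty := ⟨Ideal.span (((⊥ : Submodule (𝒜 0) A) : Set A)),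
    ⊥, Submodule.fg_bot, bot_le, rfl⟩
  obtain ⟨I₀, ⟨M₀, hMfg, hMle, rfl⟩, hmax⟩ := wf.has_min S hne
  suffices h : gyPiece 𝒜 n ≤ M₀ by
    have : gyPiece 𝒜 n = M₀ := le_antisymm h hMle
    rw [this]; exact hMfg
  intro x hx
  by_contra hxM
  -- enlarge M₀ by x
  set M₁ : Submodule (𝒜 0) A := M₀ ⊔ Submodule.span (𝒜 0) {x}
  have hM₁fg : M₁.FG := Submodule.FG.sup hMfg (Submodule.fg_span_singleton x)
  have hM₁le : M₁ ≤ gyPiece 𝒜 n :=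
    sup_le hMle ((Submodule.span_singleton_le_iff_mem x _).mpr hx)
  have hspan_le : Ideal.span (M₀ : Set A) ≤ Ideal.span (M₁ : Set A) :=
    Ideal.span_mono (by intro y hy; exact (le_sup_left : M₀ ≤ M₁) hy)
  have hSmem : Ideal.span (M₁ : Set A) ∈ S := ⟨M₁, hM₁fg, hM₁le, rfl⟩
  have : Ideal.span (M₁ : Set A) = Ideal.span (M₀ : Set A) := by
    by_contra hne'
    exact hmax _ hSmem (lt_of_le_of_ne hspan_le (Ne.symm hne'))
  have hxI : x ∈ Ideal.span (M₀ : Set A) := by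
    rw [← this]
    exact Ideal.subset_span ((le_sup_right : Submodule.span (𝒜 0) {x} ≤ M₁)
      (Submodule.mem_span_singleton_self x))
  exact hxM (gy_key 𝒜 n M₀ hMle x hxI hx)

/-- Goto–Yamagishi: if an `L`-graded commutative ring `A` is noetherian, then `A₀` is
noetherian and each graded piece `A_n` is a finitely generated `A₀`-module. -/
theorem gradeZero_noetherian_and_pieces_finite [IsNoetherianRing A] :
    IsNoetherianRing (𝒜 0) ∧
      ∀ n : L, ∃ s : Finset A, (s : Set A) ⊆ (𝒜 n : Set A) ∧
        ∀ x ∈ 𝒜 n, x ∈ Submodule.span (𝒜 0) (s : Set A) := by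
  constructor
  · -- noetherianity of A₀ : pull back well-foundedness along I ↦ span (coe '' I)
    rw [isNoetherianRing_iff, isNoetherian_iff]
    have wf : WellFounded ((· > ·) : Ideal A → Ideal A → Prop) :=
      isNoetherian_iff.mp ‹IsNoetherianRing A›
    set f : Ideal (𝒜 0) → Ideal A := fun I =>
      Ideal.span ((Submodule.map (Algebra.linearMap (𝒜 0) A) I : Submodule (𝒜 0) A) : Set A)
    have hmap_le : ∀ I : Ideal (𝒜 0),
        ((Submodule.map (Algebra.linearMap (𝒜 0) A) I : Submodule (𝒜 0) A) : Set A)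
          ⊆ (𝒜 0 : Set A) := by
      rintro I _ ⟨y, _, rfl⟩
      exact y.2
    have hrec : ∀ (I : Ideal (𝒜 0)) (x : 𝒜 0), (x : A) ∈ f I → x ∈ I := by
      intro I x hx
      have := gy_key 𝒜 0 _ (hmap_le I) _ hx x.2
      obtain ⟨y, hy, hyx⟩ := this
      have : y = x := Subtype.ext hyx
      rwa [this] at hy
    have hsm : StrictMono f := by
      intro I J hIJ
      have hle : f I ≤ f J :=
        Ideal.span_mono (Set.image_mono (le_of_lt hIJ))
      refine lt_of_le_of_ne hle ?_
      intro heq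
      obtain ⟨x, hxJ, hxI⟩ := Set.exists_of_ssubset hIJ
      apply hxI
      apply hrec I x
      rw [heq]
      exact Ideal.subset_span ⟨x, hxJ, rfl⟩
    exact Subrelation.wf (fun {a b} h => hsm h) (InvImage.wf f wf)
  · intro n
    obtain ⟨s, hs⟩ := gy_fg 𝒜 n
    refine ⟨s, ?_, ?_⟩
    · intro y hy
      have : y ∈ Submodule.span (𝒜 0) (s : Set A) := Submodule.subset_span hy
      rw [hs] at this
      exact this
    · intro x hx
      rw [hs]
      exact hx
end

section
/- Let L be a finitely generated abelian group and A = ⊕_{n∈L} A_n a noetherian L-graded commutative ring. Then A is a finitely generated A_0-algebra. -/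
variable {L A : Type*} [AddCommGroup L] [DecidableEq L] [CommRing A]
variable (𝒜 : L → AddSubgroup A) [GradedRing 𝒜]

open DirectSum

namespace GotoYamagishiAux

noncomputable section

open scoped Classical

def piece (S : Set L) : AddSubgroup A where
  carrier := {x | ∀ n, n ∉ S → decompose 𝒜 x n = 0}
  zero_mem' := fun n _ => by simp
  add_mem' := fun {a b} ha hb n hn => by
    rw [decompose_add, DirectSum.add_apply, ha n hn, hb n hn, add_zero]
  neg_mem' := fun {a} ha n hn => by
    rw [decompose_neg]
    have h2 : (-(decompose 𝒜 a)) n = -((decompose 𝒜 a) n) := rfl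
    rw [h2, ha n hn, neg_zero]

def proj (S : Set L) (x : A) : A :=
  (decompose 𝒜).symm (DFinsupp.filter (· ∈ S) (decompose 𝒜 x))

theorem decompose_proj (S : Set L) (x : A) (n : L) :
    decompose 𝒜 (proj 𝒜 S x) n = if n ∈ S then decompose 𝒜 x n else 0 := by
  rw [proj, Equiv.apply_symm_apply, DFinsupp.filter_apply]

theorem proj_mem (S : Set L) (x : A) : proj 𝒜 S x ∈ piece 𝒜 S := fun n hn => by
  rw [decompose_proj, if_neg hn]

theorem proj_eq_self {S : Set L} {x : A} (hx : x ∈ piece 𝒜 S) : proj 𝒜 S x = x := by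
  have : DFinsupp.filter (· ∈ S) (decompose 𝒜 x) = decompose 𝒜 x := by
    ext n
    rw [DFinsupp.filter_apply]
    split_ifs with h
    · rfl
    · exact (congrArg Subtype.val (hx n h)).symm
  rw [proj, this, Equiv.symm_apply_apply]

theorem proj_add (S : Set L) (x y : A) :
    proj 𝒜 S (x + y) = proj 𝒜 S x + proj 𝒜 S y := by
  rw [proj, proj, proj, decompose_add, DFinsupp.filter_add, DirectSum.decompose_symm_add]

/-- `proj` as an additive monoid hom. -/
def projHom (S : Set L) : A →+ A where
  toFun := proj 𝒜 S
  map_zero' := by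
    show proj 𝒜 S 0 = 0
    apply (decompose 𝒜).injective
    refine DFinsupp.ext fun n => ?_
    rw [decompose_proj]
    simp
  map_add' := proj_add 𝒜 S

theorem mem_piece_of_mem {S : Set L} {n : L} {x : A} (hn : n ∈ S) (hx : x ∈ 𝒜 n) :
    x ∈ piece 𝒜 S := fun m hm => by
  have hne : n ≠ m := fun h => hm (h ▸ hn)
  exact Subtype.ext (decompose_of_mem_ne 𝒜 hx hne)

theorem piece_mono {S S' : Set L} (h : S ⊆ S') : piece 𝒜 S ≤ piece 𝒜 S' :=
  fun _ hx n hn => hx n (fun hmem => hn (h hmem))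

theorem piece_sum_decompose {S : Set L} {x : A} (hx : x ∈ piece 𝒜 S) :
    x = ∑ n ∈ (decompose 𝒜 x).support, (decompose 𝒜 x n : A) :=
  (DirectSum.sum_support_decompose 𝒜 x).symm

theorem support_subset {S : Set L} {x : A} (hx : x ∈ piece 𝒜 S) :
    ∀ n ∈ (decompose 𝒜 x).support, n ∈ S := by
  intro n hn
  by_contra h
  exact (DFinsupp.mem_support_iff.mp hn) (hx n h)

theorem key_coe {m : L} {x : A} (hx : x ∈ 𝒜 m) (c : A) (n : L) :
    (decompose 𝒜 (c * x) n : A) = (decompose 𝒜 c (n - m) : A) * x := by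
  have h := DirectSum.coe_decompose_mul_add_of_right_mem 𝒜 (i := n - m) (a := c) hx
  rwa [sub_add_cancel] at h

theorem proj_mul_homog (S : Set L) {m : L} {x : A} (hx : x ∈ 𝒜 m) (b : A) :
    proj 𝒜 S (b * x) = proj 𝒜 ((· + m) ⁻¹' S) b * x := by
  apply (decompose 𝒜).injective
  refine DFinsupp.ext fun n => Subtype.ext ?_
  rw [decompose_proj, key_coe 𝒜 hx (proj 𝒜 ((· + m) ⁻¹' S) b) n, decompose_proj]
  have hiff : (n - m ∈ (· + m) ⁻¹' S) ↔ n ∈ S := by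
    simp only [Set.mem_preimage]
    rw [sub_add_cancel]
  split_ifs with h1 h2 h3
  · exact key_coe 𝒜 hx b n
  · exact absurd (hiff.mpr h1) h2
  · exact absurd (hiff.mp h3) h1
  · simp

theorem proj_mul_piece {S S' S'' : Set L} (h : ∀ m ∈ S', (· + m) ⁻¹' S = S'')
    {x : A} (hx : x ∈ piece 𝒜 S') (b : A) :
    proj 𝒜 S (b * x) = proj 𝒜 S'' b * x := by
  conv_lhs => rw [piece_sum_decompose 𝒜 hx, Finset.mul_sum]
  rw [show proj 𝒜 S = ⇑(projHom 𝒜 S) from rfl, map_sum]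
  rw [Finset.sum_congr rfl (fun n hn => ?_), ← Finset.mul_sum,
    ← piece_sum_decompose 𝒜 hx]
  show proj 𝒜 S (b * (decompose 𝒜 x n : A)) = proj 𝒜 S'' b * (decompose 𝒜 x n : A)
  rw [proj_mul_homog 𝒜 S (SetLike.coe_mem _) b, h n (support_subset 𝒜 hx n hn)]

theorem mul_mem_piece {S T U : Set L} (hU : ∀ a ∈ S, ∀ b ∈ T, a + b ∈ U)
    {x y : A} (hx : x ∈ piece 𝒜 S) (hy : y ∈ piece 𝒜 T) : x * y ∈ piece 𝒜 U := by
  rw [piece_sum_decompose 𝒜 hx, piece_sum_decompose 𝒜 hy, Finset.sum_mul_sum]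
  exact sum_mem fun m hm => sum_mem fun n hn =>
    mem_piece_of_mem 𝒜 (hU _ (support_subset 𝒜 hx m hm) _ (support_subset 𝒜 hy n hn))
      (SetLike.mul_mem_graded (SetLike.coe_mem _) (SetLike.coe_mem _))

theorem one_mem_piece {S : Set L} (h0 : (0 : L) ∈ S) : (1 : A) ∈ piece 𝒜 S :=
  mem_piece_of_mem 𝒜 h0 (SetLike.one_mem_graded 𝒜)

theorem mem_grade_zero_of_piece_zero {x : A} (hx : x ∈ piece 𝒜 ({0} : Set L)) :
    x ∈ 𝒜 0 := by
  rw [piece_sum_decompose 𝒜 hx]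
  refine sum_mem fun n hn => ?_
  have h := support_subset 𝒜 hx n hn
  simp only [Set.mem_singleton_iff] at h
  subst h
  exact SetLike.coe_mem _

theorem mem_piece_univ (x : A) : x ∈ piece 𝒜 (Set.univ : Set L) :=
  fun n hn => absurd (Set.mem_univ n) hn

/-- Extract a finite generating subset from a set spanning a f.g. ideal. -/
theorem exists_finset_span {R : Type*} [CommRing R] (S : Set R)
    (h : (Ideal.span S).FG) :
    ∃ t : Finset R, ↑t ⊆ S ∧ Ideal.span S ≤ Ideal.span (t : Set R) := by
  obtain ⟨u, hu⟩ := h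
  have hmem : ∀ g ∈ u, g ∈ Submodule.span R S := fun g hg => by
    rw [show Submodule.span R S = Ideal.span S from rfl, ← hu]
    exact Ideal.subset_span hg
  choose! f hf1 hf2 using fun g hg => Submodule.mem_span_finite_of_mem_span (hmem g hg)
  refine ⟨u.biUnion f, ?_, ?_⟩
  · intro x hx
    simp only [Finset.coe_biUnion, Set.mem_iUnion, Finset.mem_coe] at hx
    obtain ⟨g, hg, hxg⟩ := hx
    exact hf1 g hg hxg
  · rw [← hu]
    refine Ideal.span_le.mpr fun g hg => ?_
    refine Submodule.span_mono ?_ (hf2 g hg)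
    intro x hx
    simp only [Finset.coe_biUnion, Set.mem_iUnion, Finset.mem_coe]
    exact ⟨g, hg, hx⟩

section Step

variable (H' : AddSubgroup L) (g : L)

/-- The coset `k•g + H'` of degrees. -/
def T (k : ℤ) : Set L := {n | n - k • g ∈ H'}

theorem T_zero : T H' g 0 = (H' : Set L) := by
  ext n
  simp [T]

theorem T_shift (k n : ℤ) {m : L} (hm : m ∈ T H' g k) :
    (· + m) ⁻¹' (T H' g n) = T H' g (n - k) := by
  have hm' : m - k • g ∈ H' := hm
  ext l
  simp only [T, Set.mem_preimage, Set.mem_setOf_eq]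
  constructor
  · intro h
    have h2 := H'.sub_mem h hm'
    have : l + m - n • g - (m - k • g) = l - (n - k) • g := by
      rw [sub_zsmul]; abel
    rwa [this] at h2
  · intro h
    have h2 := H'.add_mem h hm'
    have : l - (n - k) • g + (m - k • g) = l + m - n • g := by
      rw [sub_zsmul]; abel
    rwa [this] at h2

theorem mem_T_self (k : ℤ) {n : L} (hn : n - k • g ∈ H') : n ∈ T H' g k := hn

variable {H' g} in
/-- Decomposition of an ideal-membership into coarse pieces. -/
theorem dec (t : Finset A) (d : A → ℤ)
    (ht : ∀ x ∈ t, x ∈ piece 𝒜 (T H' g (d x))) (n : ℤ) {a : A}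
    (ha : a ∈ piece 𝒜 (T H' g n)) (hspan : a ∈ Ideal.span (t : Set A)) :
    ∃ c : A → A, (∀ x ∈ t, c x ∈ piece 𝒜 (T H' g (n - d x))) ∧
      a = ∑ x ∈ t, c x * x := by
  obtain ⟨f, -, hf⟩ := Submodule.mem_span_finset.mp hspan
  refine ⟨fun x => proj 𝒜 (T H' g (n - d x)) (f x),
    fun x hx => proj_mem 𝒜 _ _, ?_⟩
  conv_lhs => rw [← proj_eq_self 𝒜 ha, ← hf]
  rw [show proj 𝒜 (T H' g n) = ⇑(projHom 𝒜 (T H' g n)) from rfl, map_sum]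
  refine Finset.sum_congr rfl fun x hx => ?_
  show proj 𝒜 (T H' g n) (f x • x) = _
  rw [smul_eq_mul]
  exact proj_mul_piece 𝒜 (fun m hm => T_shift H' g (d x) n hm) (ht x hx) (f x)

variable {H' g} in
theorem piece_fg [IsNoetherianRing A] (k : ℤ) :
    ∃ u : Finset A, (↑u : Set A) ⊆ (piece 𝒜 (T H' g k) : Set A) ∧
      ∀ a ∈ piece 𝒜 (T H' g k), ∃ c : A → A,
        (∀ x ∈ u, c x ∈ piece 𝒜 ((H' : Set L))) ∧ a = ∑ x ∈ u, c x * x := by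
  have hfg : (Ideal.span (piece 𝒜 (T H' g k) : Set A)).FG := IsNoetherian.noetherian _
  obtain ⟨u, hu1, hu2⟩ := exists_finset_span _ hfg
  refine ⟨u, hu1, fun a ha => ?_⟩
  obtain ⟨c, hc1, hc2⟩ := dec 𝒜 u (fun _ => k) (fun x hx => hu1 hx) k ha
    (hu2 (Ideal.subset_span ha))
  refine ⟨c, fun x hx => ?_, hc2⟩
  have := hc1 x hx
  rwa [sub_self, T_zero] at this

variable {H' g} in
theorem step [IsNoetherianRing A] (s' : Finset A)
    (IH : (piece 𝒜 (H' : Set L) : Set A) ⊆ ↑(Algebra.adjoin (𝒜 0) (↑s' : Set A))) :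
    ∃ s : Finset A,
      (piece 𝒜 ((H' ⊔ AddSubgroup.zmultiples g : AddSubgroup L) : Set L) : Set A) ⊆
        ↑(Algebra.adjoin (𝒜 0) (↑s : Set A)) := by
  classical
  set Up : Set A := ⋃ (k : ℤ) (_ : 1 ≤ k), (piece 𝒜 (T H' g k) : Set A) with hUp
  set Um : Set A := ⋃ (k : ℤ) (_ : k ≤ -1), (piece 𝒜 (T H' g k) : Set A) with hUm
  obtain ⟨Xp, hXpsub, hXpspan⟩ := exists_finset_span Up (IsNoetherian.noetherian _)
  obtain ⟨Xm, hXmsub, hXmspan⟩ := exists_finset_span Um (IsNoetherian.noetherian _)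
  have hd : ∀ x ∈ Xp, ∃ k : ℤ, 1 ≤ k ∧ x ∈ piece 𝒜 (T H' g k) := by
    intro x hx
    have h := hXpsub hx
    rw [hUp] at h
    simp only [Set.mem_iUnion, SetLike.mem_coe] at h
    obtain ⟨k, hk, hmem⟩ := h
    exact ⟨k, hk, hmem⟩
  have he : ∀ x ∈ Xm, ∃ k : ℤ, k ≤ -1 ∧ x ∈ piece 𝒜 (T H' g k) := by
    intro x hx
    have h := hXmsub hx
    rw [hUm] at h
    simp only [Set.mem_iUnion, SetLike.mem_coe] at h
    obtain ⟨k, hk, hmem⟩ := h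
    exact ⟨k, hk, hmem⟩
  choose! d hd1 hd2 using hd
  choose! e he1 he2 using he
  set D : ℤ := (((Xp.sup fun x => (d x).toNat) ⊔ (Xm.sup fun x => (-(e x)).toNat) : ℕ) : ℤ)
    with hD
  have hD0 : 0 ≤ D := Int.ofNat_nonneg _
  have hdD : ∀ x ∈ Xp, d x ≤ D := by
    intro x hx
    calc d x ≤ ((d x).toNat : ℤ) := Int.self_le_toNat _
    _ ≤ D := by
        rw [hD]
        exact_mod_cast le_sup_of_le_left (Finset.le_sup (f := fun x => (d x).toNat) hx)
  have heD : ∀ x ∈ Xm, -D ≤ e x := by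
    intro x hx
    have h1 : -(e x) ≤ ((-(e x)).toNat : ℤ) := Int.self_le_toNat _
    have h2 : (((-(e x)).toNat : ℕ) : ℤ) ≤ D := by
      rw [hD]
      exact_mod_cast le_sup_of_le_right (Finset.le_sup (f := fun x => (-(e x)).toNat) hx)
    omega
  choose u hu1 hu2 using fun k : ℤ => piece_fg 𝒜 (H' := H') (g := g) k
  set Ω : Finset A := ((s' ∪ Xp) ∪ Xm) ∪ (Finset.Icc (-D) D).biUnion u with hΩ
  set B := Algebra.adjoin (𝒜 0) (↑Ω : Set A) with hB
  have hs'B : (piece 𝒜 (H' : Set L) : Set A) ⊆ ↑B := by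
    refine subset_trans IH (SetLike.coe_subset_coe.mpr (Algebra.adjoin_mono ?_))
    intro x hx
    simp only [hΩ, Finset.coe_union, Set.mem_union, Finset.mem_coe]
    tauto
  have hΩB : ∀ x ∈ Ω, x ∈ B := fun x hx => Algebra.subset_adjoin hx
  have main : ∀ N : ℕ, ∀ n : ℤ, n.natAbs = N → ∀ a ∈ piece 𝒜 (T H' g n), a ∈ B := by
    intro N
    induction N using Nat.strong_induction_on with
    | _ N IHN =>
    intro n hnN a ha
    by_cases hbase : n.natAbs ≤ D.toNat
    · have hnIcc : n ∈ Finset.Icc (-D) D := by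
        rw [Finset.mem_Icc]
        omega
      obtain ⟨c, hc1, hc2⟩ := hu2 n a ha
      rw [hc2]
      refine Subalgebra.sum_mem _ fun x hx => Subalgebra.mul_mem _ ?_ ?_
      · exact hs'B (hc1 x hx)
      · refine hΩB x ?_
        simp only [hΩ, Finset.mem_union, Finset.mem_biUnion]
        exact Or.inr ⟨n, hnIcc, hx⟩
    · rcases (by omega : D < n ∨ n < -D) with hpos | hneg
      · have haU : a ∈ Up := by
          rw [hUp]
          refine Set.mem_iUnion.mpr ⟨n, Set.mem_iUnion.mpr ⟨by omega, ?_⟩⟩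
          exact ha
        have hmem : a ∈ Ideal.span ((Xp : Finset A) : Set A) :=
          hXpspan (Ideal.subset_span haU)
        obtain ⟨c, hc1, hc2⟩ := dec 𝒜 Xp d (fun x hx => hd2 x hx) n ha hmem
        rw [hc2]
        refine Subalgebra.sum_mem _ fun x hx => Subalgebra.mul_mem _ ?_ ?_
        · refine IHN (n - d x).natAbs ?_ (n - d x) rfl (c x) (hc1 x hx)
          have h1 := hd1 x hx
          have h2 := hdD x hx
          omega
        · refine hΩB x ?_
          simp only [hΩ, Finset.mem_union]
          tauto
      · have haU : a ∈ Um := by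
          rw [hUm]
          refine Set.mem_iUnion.mpr ⟨n, Set.mem_iUnion.mpr ⟨by omega, ?_⟩⟩
          exact ha
        have hmem : a ∈ Ideal.span ((Xm : Finset A) : Set A) :=
          hXmspan (Ideal.subset_span haU)
        obtain ⟨c, hc1, hc2⟩ := dec 𝒜 Xm e (fun x hx => he2 x hx) n ha hmem
        rw [hc2]
        refine Subalgebra.sum_mem _ fun x hx => Subalgebra.mul_mem _ ?_ ?_
        · refine IHN (n - e x).natAbs ?_ (n - e x) rfl (c x) (hc1 x hx)
          have h1 := he1 x hx
          have h2 := heD x hx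
          omega
        · refine hΩB x ?_
          simp only [hΩ, Finset.mem_union]
          tauto
  refine ⟨Ω, fun a ha => ?_⟩
  have ha' : a ∈ piece 𝒜 ((H' ⊔ AddSubgroup.zmultiples g : AddSubgroup L) : Set L) := ha
  rw [piece_sum_decompose 𝒜 ha']
  refine SetLike.mem_coe.mpr (Subalgebra.sum_mem _ fun n hn => ?_)
  have hnmem := support_subset 𝒜 ha' n hn
  obtain ⟨y, hy, z, hz, hyz⟩ := AddSubgroup.mem_sup.mp hnmem
  obtain ⟨k, rfl⟩ := AddSubgroup.mem_zmultiples_iff.mp hz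
  have hnT : n ∈ T H' g k := by
    show n - k • g ∈ H'
    rw [← hyz]
    simpa using hy
  exact main _ k rfl _ (mem_piece_of_mem 𝒜 hnT (SetLike.coe_mem _))

theorem main_list [IsNoetherianRing A] (l : List L) :
    ∃ s : Finset A,
      (piece 𝒜 ((AddSubgroup.closure {x | x ∈ l} : AddSubgroup L) : Set L) : Set A) ⊆
        ↑(Algebra.adjoin (𝒜 0) (↑s : Set A)) := by
  induction l with
  | nil =>
    refine ⟨∅, fun a ha => ?_⟩
    have h0 : ({x | x ∈ ([] : List L)} : Set L) = ∅ := by ext x; simp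
    rw [SetLike.mem_coe] at ha
    rw [h0, AddSubgroup.closure_empty] at ha
    have hz : a ∈ piece 𝒜 ({0} : Set L) := by rwa [AddSubgroup.coe_bot] at ha
    have ha0 : a ∈ 𝒜 0 := mem_grade_zero_of_piece_zero 𝒜 hz
    exact SetLike.mem_coe.mpr (Subalgebra.algebraMap_mem _ (⟨a, ha0⟩ : 𝒜 0))
  | cons g l IHl =>
    obtain ⟨s', hs'⟩ := IHl
    obtain ⟨s, hs⟩ := step 𝒜 (H' := AddSubgroup.closure {x | x ∈ l}) (g := g) s' hs'
    refine ⟨s, ?_⟩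
    have hcl : AddSubgroup.closure {x | x ∈ g :: l} =
        AddSubgroup.closure {x | x ∈ l} ⊔ AddSubgroup.zmultiples g := by
      have h1 : ({x | x ∈ g :: l} : Set L) = {g} ∪ {x | x ∈ l} := by
        ext x; simp [List.mem_cons]
      rw [h1, AddSubgroup.closure_union, ← AddSubgroup.zmultiples_eq_closure, sup_comm]
    rw [hcl]
    exact hs

end Step

end

end GotoYamagishiAux

/-- Goto–Yamagishi: a noetherian `L`-graded commutative ring, for `L` a finitely
generated abelian group, is a finitely generated algebra over its degree-zero subring. -/
theorem graded_noetherian_finiteType [AddGroup.FG L] [IsNoetherianRing A] :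
    Algebra.FiniteType (𝒜 0) A := by
  classical
  obtain ⟨S, hS1, hS2⟩ := AddGroup.fg_iff.mp ‹AddGroup.FG L›
  obtain ⟨s, hs⟩ := GotoYamagishiAux.main_list 𝒜 hS2.toFinset.toList
  have hset : {x | x ∈ hS2.toFinset.toList} = S := by
    ext x
    simp [Finset.mem_toList, Set.Finite.mem_toFinset]
  rw [hset, hS1] at hs
  refine ⟨⟨s, ?_⟩⟩
  rw [eq_top_iff]
  intro a _
  refine hs ?_
  rw [AddSubgroup.coe_top]
  exact SetLike.mem_coe.mpr (GotoYamagishiAux.mem_piece_univ 𝒜 a)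
end

section
/- Let f: A → B be a formally smooth local homomorphism of noetherian local rings, C a complete noetherian local ring, and I ⊆ C an ideal. Then any pair of compatible continuous local homomorphisms A → C and B → C/I admits a lifting B → C making the square commute. -/
universe u

/-- A local homomorphism `f : (A, mA) → (B, mB)` is formally smooth for the adic
topologies if for every ring `C` with a square-zero ideal `I` and compatible
homomorphisms `A → C`, `B → C/I` vanishing on large powers of the maximal ideals,
there exists a lifting `B → C`. -/
def IsAdicFormallySmooth {A B : Type*} [CommRing A] [CommRing B]
    (mA : Ideal A) (mB : Ideal B) (f : A →+* B) : Prop :=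
  ∀ (C : Type u) [CommRing C] (I : Ideal C), I ^ 2 = ⊥ →
    ∀ (u : A →+* C) (v : B →+* C ⧸ I),
      (∃ k : ℕ, ∀ a ∈ mA ^ k, u a = 0) →
      (∃ k : ℕ, ∀ b ∈ mB ^ k, v b = 0) →
      v.comp f = (Ideal.Quotient.mk I).comp u →
      ∃ w : B →+* C, w.comp f = u ∧ (Ideal.Quotient.mk I).comp w = v

section Glue
variable {B C : Type*} [CommRing B] [CommRing C]

lemma quot_inf_inj (a b : Ideal C) {z z' : C ⧸ (a ⊓ b)}
    (h1 : Ideal.Quotient.factor (S := a ⊓ b) (T := a) inf_le_left z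
        = Ideal.Quotient.factor (S := a ⊓ b) (T := a) inf_le_left z')
    (h2 : Ideal.Quotient.factor (S := a ⊓ b) (T := b) inf_le_right z
        = Ideal.Quotient.factor (S := a ⊓ b) (T := b) inf_le_right z') : z = z' := by
  obtain ⟨x, rfl⟩ := Ideal.Quotient.mk_surjective z
  obtain ⟨x', rfl⟩ := Ideal.Quotient.mk_surjective z'
  rw [Ideal.Quotient.factor_mk, Ideal.Quotient.factor_mk] at h1 h2
  exact Ideal.Quotient.eq.mpr (Submodule.mem_inf.mpr
    ⟨Ideal.Quotient.eq.mp h1, Ideal.Quotient.eq.mp h2⟩)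

lemma quot_glue (a b : Ideal C) (g₁ : B →+* C ⧸ a) (g₂ : B →+* C ⧸ b)
    (h : (Ideal.Quotient.factor (S := a) (T := a ⊔ b) le_sup_left).comp g₁
       = (Ideal.Quotient.factor (S := b) (T := a ⊔ b) le_sup_right).comp g₂) :
    ∃ g : B →+* C ⧸ (a ⊓ b),
      (Ideal.Quotient.factor (S := a ⊓ b) (T := a) inf_le_left).comp g = g₁ ∧
      (Ideal.Quotient.factor (S := a ⊓ b) (T := b) inf_le_right).comp g = g₂ := by
  have key : ∀ x : B, ∃ z : C ⧸ (a ⊓ b),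
      Ideal.Quotient.factor (S := a ⊓ b) (T := a) inf_le_left z = g₁ x ∧
      Ideal.Quotient.factor (S := a ⊓ b) (T := b) inf_le_right z = g₂ x := by
    intro x
    obtain ⟨p, hp⟩ := Ideal.Quotient.mk_surjective (g₁ x)
    obtain ⟨q, hq⟩ := Ideal.Quotient.mk_surjective (g₂ x)
    have hpq : p - q ∈ a ⊔ b := by
      have := RingHom.congr_fun h x
      simp only [RingHom.coe_comp, Function.comp_apply] at this
      rw [← hp, ← hq, Ideal.Quotient.factor_mk, Ideal.Quotient.factor_mk] at this
      exact Ideal.Quotient.eq.mp this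
    obtain ⟨p', hp', q', hq', hsum⟩ := Submodule.mem_sup.mp hpq
    refine ⟨Ideal.Quotient.mk _ (p - p'), ?_, ?_⟩
    · rw [Ideal.Quotient.factor_mk, ← hp]
      exact Ideal.Quotient.eq.mpr (by simpa using (neg_mem hp'))
    · rw [Ideal.Quotient.factor_mk, ← hq]
      refine Ideal.Quotient.eq.mpr ?_
      have : p - p' - q = q' := by linear_combination -hsum
      rw [this]; exact hq'
  choose z hz1 hz2 using key
  refine ⟨{ toFun := z, map_one' := ?_, map_mul' := ?_, map_zero' := ?_, map_add' := ?_ },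
    RingHom.ext hz1, RingHom.ext hz2⟩
  · exact quot_inf_inj a b (by simp [hz1]) (by simp [hz2])
  · intro x y; exact quot_inf_inj a b (by simp [hz1]) (by simp [hz2])
  · exact quot_inf_inj a b (by simp [hz1]) (by simp [hz2])
  · intro x y; exact quot_inf_inj a b (by simp [hz1]) (by simp [hz2])

end Glue

section LocalAux

variable {A C : Type*} [CommRing A] [CommRing C] [IsLocalRing A] [IsLocalRing C]

lemma map_mem_pow_of_isLocalHom (u : A →+* C) [IsLocalHom u] {k : ℕ} {a : A}
    (ha : a ∈ IsLocalRing.maximalIdeal A ^ k) : u a ∈ IsLocalRing.maximalIdeal C ^ k := by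
  have h1 : Ideal.map u (IsLocalRing.maximalIdeal A) ≤ IsLocalRing.maximalIdeal C := by
    rw [Ideal.map_le_iff_le_comap]
    intro x hx
    rw [Ideal.mem_comap, IsLocalRing.mem_maximalIdeal, mem_nonunits_iff]
    rw [IsLocalRing.mem_maximalIdeal, mem_nonunits_iff] at hx
    exact fun h => hx (IsLocalHom.map_nonunit x h)
  have h2 : u a ∈ Ideal.map u (IsLocalRing.maximalIdeal A ^ k) :=
    Ideal.mem_map_of_mem u ha
  rw [Ideal.map_pow] at h2
  exact Ideal.pow_right_mono h1 k h2

variable {B : Type*} [CommRing B] [IsLocalRing B]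

/-- The image of `v b` in `C ⧸ (I ⊔ m^k)` vanishes for `b ∈ m_B ^ k`. -/
lemma v_factor_zero (I : Ideal C) (v : B →+* C ⧸ I) [IsLocalHom v] {k : ℕ} {b : B}
    (hb : b ∈ IsLocalRing.maximalIdeal B ^ k) :
    Ideal.Quotient.factor (S := I) (T := I ⊔ IsLocalRing.maximalIdeal C ^ k) le_sup_left (v b) = 0 := by
  have h1 : Ideal.map v (IsLocalRing.maximalIdeal B)
      ≤ Ideal.map (Ideal.Quotient.mk I) (IsLocalRing.maximalIdeal C) := by
    rw [Ideal.map_le_iff_le_comap]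
    intro x hx
    rw [Ideal.mem_comap]
    obtain ⟨y, hy⟩ := Ideal.Quotient.mk_surjective (v x)
    by_cases hy' : y ∈ IsLocalRing.maximalIdeal C
    · rw [← hy]; exact Ideal.mem_map_of_mem _ hy'
    · exfalso
      rw [IsLocalRing.mem_maximalIdeal, mem_nonunits_iff, not_not] at hy'
      rw [IsLocalRing.mem_maximalIdeal, mem_nonunits_iff] at hx
      exact hx (IsLocalHom.map_nonunit x (hy ▸ hy'.map (Ideal.Quotient.mk I)))
  have h2 : v b ∈ Ideal.map (Ideal.Quotient.mk I) (IsLocalRing.maximalIdeal C ^ k) := by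
    have := Ideal.mem_map_of_mem v hb
    rw [Ideal.map_pow] at this
    rw [Ideal.map_pow]
    exact Ideal.pow_right_mono h1 k this
  obtain ⟨y, hy⟩ := Ideal.Quotient.mk_surjective (v b)
  have h3 : y ∈ IsLocalRing.maximalIdeal C ^ k ⊔ I := by
    have : y ∈ Ideal.comap (Ideal.Quotient.mk I)
        (Ideal.map (Ideal.Quotient.mk I) (IsLocalRing.maximalIdeal C ^ k)) := by
      rw [Ideal.mem_comap, hy]; exact h2
    rwa [Ideal.comap_map_of_surjective _ Ideal.Quotient.mk_surjective,
      ← RingHom.ker_eq_comap_bot, Ideal.mk_ker] at this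
  rw [← hy, Ideal.Quotient.factor_mk, Ideal.Quotient.eq_zero_iff_mem]
  rwa [sup_comm] at h3

end LocalAux

section Step

variable {A B : Type*} {C : Type u} [CommRing A] [CommRing B] [CommRing C]
  [IsLocalRing A] [IsLocalRing B] [IsLocalRing C]

/-- The conditions on a partial lift `B → C/m^n`. -/
def AdicGood (f : A →+* B) (I : Ideal C) (u : A →+* C) (v : B →+* C ⧸ I) (n : ℕ)
    (w : B →+* C ⧸ (IsLocalRing.maximalIdeal C ^ n)) : Prop :=
  w.comp f = (Ideal.Quotient.mk _).comp u ∧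
  (Ideal.Quotient.factor (S := IsLocalRing.maximalIdeal C ^ n)
      (T := I ⊔ IsLocalRing.maximalIdeal C ^ n) le_sup_right).comp w
    = (Ideal.Quotient.factor (S := I) (T := I ⊔ IsLocalRing.maximalIdeal C ^ n) le_sup_left).comp v ∧
  ∃ k : ℕ, ∀ b ∈ IsLocalRing.maximalIdeal B ^ k, w b = 0

theorem adic_step (f : A →+* B) [IsLocalHom f]
    (hf : IsAdicFormallySmooth.{u}
      (IsLocalRing.maximalIdeal A) (IsLocalRing.maximalIdeal B) f)
    (I : Ideal C) (u : A →+* C) (v : B →+* C ⧸ I)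
    [IsLocalHom u] [IsLocalHom v]
    (hcomp : v.comp f = (Ideal.Quotient.mk I).comp u)
    (hI : I ≤ IsLocalRing.maximalIdeal C) (n : ℕ)
    (w : B →+* C ⧸ (IsLocalRing.maximalIdeal C ^ n)) (hw : AdicGood f I u v n w) :
    ∃ w' : B →+* C ⧸ (IsLocalRing.maximalIdeal C ^ (n + 1)),
      AdicGood f I u v (n + 1) w' ∧
      (Ideal.Quotient.factor (S := _) (T := _) (Ideal.pow_le_pow_right n.le_succ)).comp w' = w := by
  obtain ⟨hw1, hw2, k₃, hw3⟩ := hw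
  have hsup : IsLocalRing.maximalIdeal C ^ n
        ⊔ (I ⊔ IsLocalRing.maximalIdeal C ^ (n + 1))
      = I ⊔ IsLocalRing.maximalIdeal C ^ n := by
    rw [sup_left_comm, (sup_eq_left (a := IsLocalRing.maximalIdeal C ^ n)
      (b := IsLocalRing.maximalIdeal C ^ (n + 1))).mpr (Ideal.pow_le_pow_right n.le_succ)]
  -- glue w with (v mod I ⊔ m^(n+1)) into a map B → C/J
  have hagree : (Ideal.Quotient.factor (S := IsLocalRing.maximalIdeal C ^ n)
        (T := IsLocalRing.maximalIdeal C ^ n ⊔ (I ⊔ IsLocalRing.maximalIdeal C ^ (n + 1)))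
        le_sup_left).comp w
      = (Ideal.Quotient.factor (S := I ⊔ IsLocalRing.maximalIdeal C ^ (n + 1))
        (T := IsLocalRing.maximalIdeal C ^ n ⊔ (I ⊔ IsLocalRing.maximalIdeal C ^ (n + 1)))
        le_sup_right).comp
        ((Ideal.Quotient.factor (S := I) (T := I ⊔ IsLocalRing.maximalIdeal C ^ (n + 1))
          le_sup_left).comp v) := by
    ext x
    obtain ⟨p, hp⟩ := Ideal.Quotient.mk_surjective (w x)
    obtain ⟨q, hq⟩ := Ideal.Quotient.mk_surjective (v x)
    simp only [RingHom.coe_comp, Function.comp_apply, ← hp, ← hq,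
      Ideal.Quotient.factor_mk]
    rw [Ideal.Quotient.eq, hsup]
    have := RingHom.congr_fun hw2 x
    simp only [RingHom.coe_comp, Function.comp_apply, ← hp, ← hq,
      Ideal.Quotient.factor_mk] at this
    exact Ideal.Quotient.eq.mp this
  obtain ⟨g, hg1, hg2⟩ := quot_glue (IsLocalRing.maximalIdeal C ^ n)
    (I ⊔ IsLocalRing.maximalIdeal C ^ (n + 1)) w
    ((Ideal.Quotient.factor (S := I) (T := I ⊔ IsLocalRing.maximalIdeal C ^ (n + 1))
      le_sup_left).comp v) hagree
  have h1 : IsLocalRing.maximalIdeal C ^ (n + 1)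
      ≤ IsLocalRing.maximalIdeal C ^ n ⊓ (I ⊔ IsLocalRing.maximalIdeal C ^ (n + 1)) :=
    le_inf (Ideal.pow_le_pow_right n.le_succ) le_sup_right
  have hJ2 : (IsLocalRing.maximalIdeal C ^ n
        ⊓ (I ⊔ IsLocalRing.maximalIdeal C ^ (n + 1))) ^ 2
      ≤ IsLocalRing.maximalIdeal C ^ (n + 1) := by
    have hle : (IsLocalRing.maximalIdeal C ^ n
          ⊓ (I ⊔ IsLocalRing.maximalIdeal C ^ (n + 1))) ^ 2
        ≤ IsLocalRing.maximalIdeal C ^ n * (I ⊔ IsLocalRing.maximalIdeal C ^ (n + 1)) := by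
      rw [pow_two]; exact Ideal.mul_mono inf_le_left inf_le_right
    refine hle.trans ?_
    rw [Ideal.mul_sup]
    refine sup_le ?_ Ideal.mul_le_right
    calc IsLocalRing.maximalIdeal C ^ n * I
        ≤ IsLocalRing.maximalIdeal C ^ n * IsLocalRing.maximalIdeal C :=
          Ideal.mul_mono_right hI
      _ = IsLocalRing.maximalIdeal C ^ (n + 1) :=
          (pow_succ (IsLocalRing.maximalIdeal C) n).symm
  have hK2 : ((IsLocalRing.maximalIdeal C ^ n
        ⊓ (I ⊔ IsLocalRing.maximalIdeal C ^ (n + 1))).map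
        (Ideal.Quotient.mk (IsLocalRing.maximalIdeal C ^ (n + 1)))) ^ 2 = ⊥ := by
    rw [← Ideal.map_pow, eq_bot_iff, Ideal.map_le_iff_le_comap]
    intro x hx
    rw [Ideal.mem_comap, Submodule.mem_bot, Ideal.Quotient.eq_zero_iff_mem]
    exact hJ2 hx
  -- continuity of u'
  have hu'cont : ∃ k : ℕ, ∀ a ∈ IsLocalRing.maximalIdeal A ^ k,
      ((Ideal.Quotient.mk (IsLocalRing.maximalIdeal C ^ (n + 1))).comp u) a = 0 := by
    refine ⟨n + 1, fun a ha => ?_⟩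
    simp only [RingHom.coe_comp, Function.comp_apply, Ideal.Quotient.eq_zero_iff_mem]
    exact map_mem_pow_of_isLocalHom u ha
  -- g vanishes on a power of the maximal ideal of B
  have hgzero : ∀ b ∈ IsLocalRing.maximalIdeal B ^ (max k₃ (n + 1)), g b = 0 := by
    intro b hb
    have hb3 : b ∈ IsLocalRing.maximalIdeal B ^ k₃ :=
      Ideal.pow_le_pow_right (le_max_left _ _) hb
    have hbn : b ∈ IsLocalRing.maximalIdeal B ^ (n + 1) :=
      Ideal.pow_le_pow_right (le_max_right _ _) hb
    obtain ⟨x, hx⟩ := Ideal.Quotient.mk_surjective (g b)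
    have c1 : x ∈ IsLocalRing.maximalIdeal C ^ n := by
      have := RingHom.congr_fun hg1 b
      simp only [RingHom.coe_comp, Function.comp_apply, ← hx,
        Ideal.Quotient.factor_mk] at this
      rw [hw3 b hb3] at this
      exact (Ideal.Quotient.eq_zero_iff_mem).mp this
    have c2 : x ∈ I ⊔ IsLocalRing.maximalIdeal C ^ (n + 1) := by
      have := RingHom.congr_fun hg2 b
      simp only [RingHom.coe_comp, Function.comp_apply, ← hx,
        Ideal.Quotient.factor_mk] at this
      rw [v_factor_zero I v hbn] at this
      exact (Ideal.Quotient.eq_zero_iff_mem).mp this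
    rw [← hx, Ideal.Quotient.eq_zero_iff_mem]
    exact Submodule.mem_inf.mpr ⟨c1, c2⟩
  have hv'cont : ∃ k : ℕ, ∀ b ∈ IsLocalRing.maximalIdeal B ^ k,
      ((DoubleQuot.quotQuotEquivQuotOfLE h1).symm.toRingHom.comp g) b = 0 := by
    refine ⟨max k₃ (n + 1), fun b hb => ?_⟩
    simp only [RingHom.coe_comp, Function.comp_apply]
    rw [hgzero b hb, map_zero]
  -- compatibility
  have hgf : ∀ a : A, g (f a) = Ideal.Quotient.mk _ (u a) := by
    intro a
    refine quot_inf_inj (IsLocalRing.maximalIdeal C ^ n)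
      (I ⊔ IsLocalRing.maximalIdeal C ^ (n + 1)) ?_ ?_
    · have := RingHom.congr_fun hg1 (f a)
      simp only [RingHom.coe_comp, Function.comp_apply] at this
      rw [this, Ideal.Quotient.factor_mk]
      exact RingHom.congr_fun hw1 a
    · have := RingHom.congr_fun hg2 (f a)
      simp only [RingHom.coe_comp, Function.comp_apply] at this
      rw [this, Ideal.Quotient.factor_mk]
      have hva : v (f a) = Ideal.Quotient.mk I (u a) := RingHom.congr_fun hcomp a
      rw [hva, Ideal.Quotient.factor_mk]
  have hcomp' : ((DoubleQuot.quotQuotEquivQuotOfLE h1).symm.toRingHom.comp g).comp f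
      = (Ideal.Quotient.mk _).comp
        ((Ideal.Quotient.mk (IsLocalRing.maximalIdeal C ^ (n + 1))).comp u) := by
    ext a
    simp only [RingHom.coe_comp, Function.comp_apply, RingEquiv.toRingHom_eq_coe,
      RingHom.coe_coe]
    rw [hgf a, DoubleQuot.quotQuotEquivQuotOfLE_symm_mk]
    rfl
  obtain ⟨w', hwf, hwv⟩ := hf (C ⧸ IsLocalRing.maximalIdeal C ^ (n + 1)) _ hK2
    ((Ideal.Quotient.mk (IsLocalRing.maximalIdeal C ^ (n + 1))).comp u)
    ((DoubleQuot.quotQuotEquivQuotOfLE h1).symm.toRingHom.comp g)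
    hu'cont hv'cont hcomp'
  have hrep : ∀ (x : B) (c : C),
      Ideal.Quotient.mk (IsLocalRing.maximalIdeal C ^ (n + 1)) c = w' x →
      Ideal.Quotient.mk (IsLocalRing.maximalIdeal C ^ n
        ⊓ (I ⊔ IsLocalRing.maximalIdeal C ^ (n + 1))) c = g x := by
    intro x c hc
    have h0 := RingHom.congr_fun hwv x
    simp only [RingHom.coe_comp, Function.comp_apply] at h0
    have h0' : (DoubleQuot.quotQuotEquivQuotOfLE h1)
        (Ideal.Quotient.mk _ (w' x)) = g x := by
      rw [h0]; exact (DoubleQuot.quotQuotEquivQuotOfLE h1).apply_symm_apply (g x)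
    rw [← hc] at h0'
    rwa [show (Ideal.Quotient.mk _)
        ((Ideal.Quotient.mk (IsLocalRing.maximalIdeal C ^ (n + 1))) c)
        = DoubleQuot.quotQuotMk (IsLocalRing.maximalIdeal C ^ (n + 1)) _ c from rfl,
      DoubleQuot.quotQuotEquivQuotOfLE_quotQuotMk] at h0'
  have hzero' : ∀ b ∈ IsLocalRing.maximalIdeal B ^ (max k₃ (n + 1) + max k₃ (n + 1)),
      w' b = 0 := by
    intro b hb
    have hsub : Ideal.map w' (IsLocalRing.maximalIdeal B ^ (max k₃ (n + 1)))
        ≤ (IsLocalRing.maximalIdeal C ^ n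
          ⊓ (I ⊔ IsLocalRing.maximalIdeal C ^ (n + 1))).map
          (Ideal.Quotient.mk (IsLocalRing.maximalIdeal C ^ (n + 1))) := by
      rw [Ideal.map_le_iff_le_comap]
      intro x hx
      rw [Ideal.mem_comap]
      have h0 := RingHom.congr_fun hwv x
      simp only [RingHom.coe_comp, Function.comp_apply] at h0
      rw [← Ideal.Quotient.eq_zero_iff_mem, h0, hgzero x hx, map_zero]
    have hmap : Ideal.map w' (IsLocalRing.maximalIdeal B
        ^ (max k₃ (n + 1) + max k₃ (n + 1))) ≤ ⊥ := by
      have hmm : Ideal.map w' (IsLocalRing.maximalIdeal B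
          ^ (max k₃ (n + 1) + max k₃ (n + 1)))
          ≤ ((IsLocalRing.maximalIdeal C ^ n
            ⊓ (I ⊔ IsLocalRing.maximalIdeal C ^ (n + 1))).map
            (Ideal.Quotient.mk (IsLocalRing.maximalIdeal C ^ (n + 1))))
          * ((IsLocalRing.maximalIdeal C ^ n
            ⊓ (I ⊔ IsLocalRing.maximalIdeal C ^ (n + 1))).map
            (Ideal.Quotient.mk (IsLocalRing.maximalIdeal C ^ (n + 1)))) := by
        rw [show IsLocalRing.maximalIdeal B ^ (max k₃ (n + 1) + max k₃ (n + 1))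
            = IsLocalRing.maximalIdeal B ^ max k₃ (n + 1)
              * IsLocalRing.maximalIdeal B ^ max k₃ (n + 1) from pow_add _ _ _,
          Ideal.map_mul]
        exact Ideal.mul_mono hsub hsub
      exact hmm.trans (le_of_eq (by rw [← pow_two, hK2]))
    exact Submodule.mem_bot _ |>.mp (hmap (Ideal.mem_map_of_mem w' hb))
  refine ⟨w', ⟨hwf, ?_, ⟨_, hzero'⟩⟩, ?_⟩
  · -- compatibility with v mod I ⊔ m^(n+1)
    ext x
    obtain ⟨c, hc⟩ := Ideal.Quotient.mk_surjective (w' x)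
    have hcJ := hrep x c hc
    have h2 := RingHom.congr_fun hg2 x
    simp only [RingHom.coe_comp, Function.comp_apply] at h2 ⊢
    rw [← h2, ← hc, Ideal.Quotient.factor_mk, ← hcJ, Ideal.Quotient.factor_mk]
  · -- compatibility with w
    ext x
    obtain ⟨c, hc⟩ := Ideal.Quotient.mk_surjective (w' x)
    have hcJ := hrep x c hc
    have h2 := RingHom.congr_fun hg1 x
    simp only [RingHom.coe_comp, Function.comp_apply] at h2 ⊢
    rw [← h2, ← hc, Ideal.Quotient.factor_mk, ← hcJ, Ideal.Quotient.factor_mk]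

end Step
section Seq

variable {A B : Type*} {C : Type u} [CommRing A] [CommRing B] [CommRing C]
  [IsLocalRing A] [IsLocalRing B] [IsLocalRing C]

lemma quot_pow_zero_subsingleton (J : Ideal C) : Subsingleton (C ⧸ (J ^ 0)) :=
  Ideal.Quotient.subsingleton_iff.mpr (by rw [pow_zero, Ideal.one_eq_top])

/-- The base lift `B → C/m^0 = 0`. -/
def adicBase : B →+* C ⧸ (IsLocalRing.maximalIdeal C ^ 0) :=
  haveI := quot_pow_zero_subsingleton (C := C) (IsLocalRing.maximalIdeal C)
  { toFun := fun _ => 0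
    map_one' := Subsingleton.elim _ _
    map_mul' := fun _ _ => Subsingleton.elim _ _
    map_zero' := Subsingleton.elim _ _
    map_add' := fun _ _ => Subsingleton.elim _ _ }

lemma adicBase_good (f : A →+* B) (I : Ideal C) (u : A →+* C) (v : B →+* C ⧸ I) :
    AdicGood f I u v 0 (adicBase (B := B) (C := C)) := by
  haveI := quot_pow_zero_subsingleton (C := C) (IsLocalRing.maximalIdeal C)
  haveI : Subsingleton (C ⧸ (I ⊔ IsLocalRing.maximalIdeal C ^ 0)) :=
    Ideal.Quotient.subsingleton_iff.mpr
      (by rw [pow_zero, Ideal.one_eq_top, sup_top_eq])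
  refine ⟨?_, ?_, 0, fun b _ => Subsingleton.elim _ _⟩
  · exact RingHom.ext fun _ => Subsingleton.elim _ _
  · exact RingHom.ext fun _ => Subsingleton.elim _ _

/-- The recursively constructed tower of lifts. -/
noncomputable def adicSeq (f : A →+* B) [IsLocalHom f]
    (hf : IsAdicFormallySmooth.{u}
      (IsLocalRing.maximalIdeal A) (IsLocalRing.maximalIdeal B) f)
    (I : Ideal C) (u : A →+* C) (v : B →+* C ⧸ I) [IsLocalHom u] [IsLocalHom v]
    (hcomp : v.comp f = (Ideal.Quotient.mk I).comp u)
    (hI : I ≤ IsLocalRing.maximalIdeal C) :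
    (n : ℕ) → {w : B →+* C ⧸ (IsLocalRing.maximalIdeal C ^ n) // AdicGood f I u v n w}
  | 0 => ⟨adicBase, adicBase_good f I u v⟩
  | n + 1 =>
    ⟨(adic_step f hf I u v hcomp hI n (adicSeq f hf I u v hcomp hI n).1
        (adicSeq f hf I u v hcomp hI n).2).choose,
      (adic_step f hf I u v hcomp hI n (adicSeq f hf I u v hcomp hI n).1
        (adicSeq f hf I u v hcomp hI n).2).choose_spec.1⟩

lemma adicSeq_compat (f : A →+* B) [IsLocalHom f]
    (hf : IsAdicFormallySmooth.{u}
      (IsLocalRing.maximalIdeal A) (IsLocalRing.maximalIdeal B) f)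
    (I : Ideal C) (u : A →+* C) (v : B →+* C ⧸ I) [IsLocalHom u] [IsLocalHom v]
    (hcomp : v.comp f = (Ideal.Quotient.mk I).comp u)
    (hI : I ≤ IsLocalRing.maximalIdeal C) (n : ℕ) :
    (Ideal.Quotient.factor (S := _) (T := _) (Ideal.pow_le_pow_right n.le_succ)).comp
        (adicSeq f hf I u v hcomp hI (n + 1)).1
      = (adicSeq f hf I u v hcomp hI n).1 :=
  (adic_step f hf I u v hcomp hI n (adicSeq f hf I u v hcomp hI n).1
    (adicSeq f hf I u v hcomp hI n).2).choose_spec.2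

end Seq

/-- Adic lifting property: let `f : A → B` be a formally smooth local homomorphism of
noetherian local rings, `C` a complete noetherian local ring and `I ⊆ C` an ideal.
Any pair of compatible (continuous) local homomorphisms `A → C` and `B → C/I` admits
a lifting `B → C` making the square commute. -/
theorem adic_lifting_of_formallySmooth {A B : Type*} {C : Type u}
    [CommRing A] [CommRing B] [CommRing C]
    [IsNoetherianRing A] [IsNoetherianRing B] [IsNoetherianRing C]
    [IsLocalRing A] [IsLocalRing B] [IsLocalRing C]
    [IsAdicComplete (IsLocalRing.maximalIdeal C) C]
    (f : A →+* B) [IsLocalHom f]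
    (hf : IsAdicFormallySmooth.{u}
      (IsLocalRing.maximalIdeal A) (IsLocalRing.maximalIdeal B) f)
    (I : Ideal C) (u : A →+* C) (v : B →+* C ⧸ I)
    [IsLocalHom u] [IsLocalHom v]
    (hcomp : v.comp f = (Ideal.Quotient.mk I).comp u) :
    ∃ w : B →+* C, w.comp f = u ∧ (Ideal.Quotient.mk I).comp w = v := by

  have hIne : I ≠ ⊤ := by
    intro hT
    haveI : Subsingleton (C ⧸ I) := Ideal.Quotient.subsingleton_iff.mpr hT
    have h0 : IsUnit (v 0) := by
      rw [Subsingleton.elim (v 0) 1]; exact isUnit_one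
    have h1 : IsUnit (0 : B) := IsLocalHom.map_nonunit 0 h0
    exact zero_ne_one (isUnit_zero_iff.mp h1)
  have hI : I ≤ IsLocalRing.maximalIdeal C := IsLocalRing.le_maximalIdeal hIne
  have compat : ∀ (b : B) (i j : ℕ), i ≤ j → ∀ x : C,
      Ideal.Quotient.mk (IsLocalRing.maximalIdeal C ^ j) x
        = (adicSeq f hf I u v hcomp hI j).1 b →
      Ideal.Quotient.mk (IsLocalRing.maximalIdeal C ^ i) x
        = (adicSeq f hf I u v hcomp hI i).1 b := by
    intro b i j hij
    induction j, hij using Nat.le_induction with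
    | base => exact fun x hx => hx
    | succ j hij ih =>
      intro x hx
      refine ih x ?_
      have h2 := RingHom.congr_fun (adicSeq_compat f hf I u v hcomp hI j) b
      simp only [RingHom.coe_comp, Function.comp_apply] at h2
      rw [← h2, ← hx, Ideal.Quotient.factor_mk]
  have hsmul : ∀ n : ℕ,
      (IsLocalRing.maximalIdeal C ^ n • ⊤ : Submodule C C)
        = IsLocalRing.maximalIdeal C ^ n := fun n => by
    rw [smul_eq_mul, ← Ideal.one_eq_top, mul_one]
  have exL : ∀ b : B, ∃ L : C, ∀ n : ℕ,
      Ideal.Quotient.mk (IsLocalRing.maximalIdeal C ^ n) L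
        = (adicSeq f hf I u v hcomp hI n).1 b := by
    intro b
    have hx : ∀ n : ℕ, ∃ x : C,
        Ideal.Quotient.mk (IsLocalRing.maximalIdeal C ^ n) x
          = (adicSeq f hf I u v hcomp hI n).1 b :=
      fun n => Ideal.Quotient.mk_surjective _
    choose x hxs using hx
    have hcauchy : ∀ {i j}, i ≤ j →
        x i ≡ x j [SMOD (IsLocalRing.maximalIdeal C ^ i • ⊤ : Submodule C C)] := by
      intro i j hij
      rw [SModEq.sub_mem, hsmul i]
      have h3 := compat b i j hij (x j) (hxs j)
      exact Ideal.Quotient.eq.mp ((hxs i).trans h3.symm)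
    obtain ⟨L, hL⟩ := IsPrecomplete.prec
      (inferInstance : IsPrecomplete (IsLocalRing.maximalIdeal C) C) hcauchy
    refine ⟨L, fun n => ?_⟩
    have h4 := hL n
    rw [SModEq.sub_mem, hsmul n] at h4
    rw [← Ideal.Quotient.eq.mpr h4]
    exact hxs n
  choose W hW using exL
  have eqOfMk : ∀ c d : C,
      (∀ n : ℕ, Ideal.Quotient.mk (IsLocalRing.maximalIdeal C ^ n) c
        = Ideal.Quotient.mk (IsLocalRing.maximalIdeal C ^ n) d) → c = d := by
    intro c d h
    have h0 : ∀ n : ℕ, c - d ≡ 0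
        [SMOD (IsLocalRing.maximalIdeal C ^ n • ⊤ : Submodule C C)] := fun n => by
      rw [SModEq.zero, hsmul n]
      exact Ideal.Quotient.eq.mp (h n)
    exact sub_eq_zero.mp (IsHausdorff.haus
      (inferInstance : IsHausdorff (IsLocalRing.maximalIdeal C) C) (c - d) h0)
  have hone : W 1 = 1 := eqOfMk _ _ (fun n => by rw [hW 1 n, map_one, map_one])
  have hmul : ∀ x y : B, W (x * y) = W x * W y := fun x y =>
    eqOfMk _ _ (fun n => by
      rw [hW (x * y) n, map_mul, map_mul, ← hW x n, ← hW y n])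
  have hzero : W 0 = 0 := eqOfMk _ _ (fun n => by rw [hW 0 n, map_zero, map_zero])
  have hadd : ∀ x y : B, W (x + y) = W x + W y := fun x y =>
    eqOfMk _ _ (fun n => by
      rw [hW (x + y) n, map_add, map_add, ← hW x n, ← hW y n])
  refine ⟨⟨⟨⟨W, hone⟩, hmul⟩, hzero, hadd⟩, ?_, ?_⟩
  · ext a
    simp only [RingHom.coe_comp, Function.comp_apply, RingHom.coe_mk,
      MonoidHom.coe_mk, OneHom.coe_mk]
    refine eqOfMk _ _ (fun n => ?_)
    rw [hW (f a) n]
    have h5 := RingHom.congr_fun (adicSeq f hf I u v hcomp hI n).2.1 a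
    simpa using h5
  · ext b
    simp only [RingHom.coe_comp, Function.comp_apply, RingHom.coe_mk,
      MonoidHom.coe_mk, OneHom.coe_mk]
    obtain ⟨y, hy⟩ := Ideal.Quotient.mk_surjective (v b)
    have hmem : ∀ n : ℕ, W b - y ∈ I ⊔ IsLocalRing.maximalIdeal C ^ n := by
      intro n
      have h2 := RingHom.congr_fun (adicSeq f hf I u v hcomp hI n).2.2.1 b
      simp only [RingHom.coe_comp, Function.comp_apply] at h2
      rw [← hW b n, Ideal.Quotient.factor_mk, ← hy, Ideal.Quotient.factor_mk] at h2
      exact Ideal.Quotient.eq.mp h2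
    haveI := Ideal.Quotient.nontrivial_iff.mpr hIne
    haveI : IsLocalRing (C ⧸ I) :=
      IsLocalRing.of_surjective' (Ideal.Quotient.mk I) Ideal.Quotient.mk_surjective
    have hJne : Ideal.map (Ideal.Quotient.mk I) (IsLocalRing.maximalIdeal C) ≠ ⊤ := by
      intro hT
      have hcm := Ideal.comap_map_of_surjective (Ideal.Quotient.mk I)
        Ideal.Quotient.mk_surjective (IsLocalRing.maximalIdeal C)
      rw [hT, Ideal.comap_top, ← RingHom.ker_eq_comap_bot, Ideal.mk_ker,
        sup_eq_left.mpr hI] at hcm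
      exact Ideal.IsMaximal.ne_top (IsLocalRing.maximalIdeal.isMaximal C) hcm.symm
    have hpow : ∀ n : ℕ, Ideal.Quotient.mk I (W b - y)
        ∈ (Ideal.map (Ideal.Quotient.mk I) (IsLocalRing.maximalIdeal C)) ^ n := by
      intro n
      have h5 : Ideal.Quotient.mk I (W b - y)
          ∈ Ideal.map (Ideal.Quotient.mk I) (I ⊔ IsLocalRing.maximalIdeal C ^ n) :=
        Ideal.mem_map_of_mem _ (hmem n)
      rwa [Ideal.map_sup, Ideal.map_quotient_self, bot_sup_eq, Ideal.map_pow] at h5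
    have hbot : Ideal.Quotient.mk I (W b - y) ∈ (⊥ : Ideal (C ⧸ I)) := by
      rw [← Ideal.iInf_pow_eq_bot_of_isLocalRing
        (I := Ideal.map (Ideal.Quotient.mk I) (IsLocalRing.maximalIdeal C)) hJne]
      exact Submodule.mem_iInf _ |>.mpr hpow
    rw [Submodule.mem_bot] at hbot
    have h6 : W b - y ∈ I := Ideal.Quotient.eq_zero_iff_mem.mp hbot
    rw [← hy]
    exact Ideal.Quotient.eq.mpr h6
end
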